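/- For every natural number ℓ there exists a unique monic polynomial q of degree ℓ over ℂ whose coefficient of w^{ℓ-1} equals 1 (when ℓ ≥ 1) such that the polynomial (2ℓ+1)·(w−2)·q(w) − w·q(w) − 2·w·(w−2)·q′(w) is a constant polynomial. -/

import Mathlib

open Polynomial

/-- The expression `(2ℓ+1)(w−2)q(w) − w q(w) − 2w(w−2)q′(w)`. -/
noncomputable def whithamPoly (ℓ : ℕ) (q : Polynomial ℂ) : Polynomial ℂ :=
  C (2 * (ℓ : ℂ) + 1) * ((X - C 2) * q) - X * q - C 2 * X * (X - C 2) * derivative q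

-- coefficient of X * derivative q
lemma coeff_X_mul_deriv (q : Polynomial ℂ) (n : ℕ) :
    (X * derivative q).coeff n = (n : ℂ) * q.coeff n := by
  cases n with
  | zero => simp [mul_coeff_zero]
  | succ m => rw [coeff_X_mul, coeff_derivative]; push_cast; ring

lemma whitham_coeff (ℓ : ℕ) (q : Polynomial ℂ) (n : ℕ) :
    (whithamPoly ℓ q).coeff (n + 1)
      = 2 * ((ℓ : ℂ) - n) * q.coeff n - 2 * (2 * ℓ - 1 - 2 * n) * q.coeff (n + 1) := by
  have h1 : whithamPoly ℓ q
      = C (-2 * (2 * (ℓ:ℂ) + 1)) * q + C (2 * (ℓ:ℂ)) * (X * q)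
        - C 2 * (X * (X * derivative q)) + C 4 * (X * derivative q) := by
    unfold whithamPoly
    simp only [C_mul, C_add, C_neg, C_1, map_neg, map_ofNat]
    ring
  rw [h1]
  simp only [coeff_add, coeff_sub, coeff_C_mul, coeff_X_mul]
  rw [coeff_X_mul_deriv, coeff_derivative]
  ring

noncomputable def qcoef (ℓ k : ℕ) : ℂ := (Nat.centralBinom (ℓ - k) : ℂ) / 2 ^ (ℓ - k)

noncomputable def qpoly (ℓ : ℕ) : Polynomial ℂ :=
  ∑ k ∈ Finset.range (ℓ + 1), monomial k (qcoef ℓ k)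

lemma coeff_qpoly (ℓ k : ℕ) : (qpoly ℓ).coeff k = if k ≤ ℓ then qcoef ℓ k else 0 := by
  simp [qpoly, coeff_monomial, Finset.sum_ite_eq, Nat.lt_succ_iff]

lemma qcoef_self (ℓ : ℕ) : qcoef ℓ ℓ = 1 := by simp [qcoef]

lemma qpoly_natDegree (ℓ : ℕ) : (qpoly ℓ).natDegree = ℓ := by
  apply le_antisymm
  · apply Polynomial.natDegree_le_iff_coeff_eq_zero.mpr
    intro k hk
    rw [coeff_qpoly]
    simp [Nat.not_le.mpr hk]
  · apply le_natDegree_of_ne_zero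
    rw [coeff_qpoly]
    simp [qcoef_self]

lemma qpoly_monic (ℓ : ℕ) : (qpoly ℓ).Monic := by
  rw [Monic, Polynomial.leadingCoeff, qpoly_natDegree, coeff_qpoly]
  simp [qcoef_self]

-- the key recurrence
lemma qpoly_star (ℓ n : ℕ) :
    ((ℓ : ℂ) - n) * (qpoly ℓ).coeff n = (2 * ℓ - 1 - 2 * n) * (qpoly ℓ).coeff (n + 1) := by
  rcases lt_trichotomy n ℓ with h | h | h
  · -- n < ℓ
    obtain ⟨m, hm⟩ : ∃ m, ℓ - n = m + 1 := ⟨ℓ - n - 1, by omega⟩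
    rw [coeff_qpoly, coeff_qpoly, if_pos (by omega), if_pos (by omega)]
    unfold qcoef
    rw [hm, show ℓ - (n + 1) = m from by omega]
    have key := Nat.succ_mul_centralBinom_succ m
    have hℓ : (ℓ : ℂ) = (n : ℂ) + m + 1 := by push_cast [show ℓ = n + m + 1 from by omega]; ring
    have h2 : (2 : ℂ) ^ (m + 1) ≠ 0 := pow_ne_zero _ two_ne_zero
    have h2' : (2 : ℂ) ^ m ≠ 0 := pow_ne_zero _ two_ne_zero
    field_simp [hℓ]
    have keyC : ((m : ℂ) + 1) * (Nat.centralBinom (m + 1) : ℂ)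
        = 2 * (2 * m + 1) * (Nat.centralBinom m : ℂ) := by exact_mod_cast key
    ring_nf
    ring_nf at keyC
    linear_combination ((Nat.centralBinom (1 + m) : ℂ) - 4 * (Nat.centralBinom m : ℂ)) * (2:ℂ)^m * hℓ + (2:ℂ)^m * keyC
  · subst h
    have hz : (qpoly n).coeff (n + 1) = 0 := by rw [coeff_qpoly, if_neg (by omega)]
    rw [hz, sub_self, zero_mul, mul_zero]
  · rw [coeff_qpoly, coeff_qpoly, if_neg (by omega), if_neg (by omega)]
    simp

lemma star_of_const (ℓ : ℕ) (q : Polynomial ℂ) (K : ℂ) (h : whithamPoly ℓ q = C K) (n : ℕ) :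
    ((ℓ : ℂ) - n) * q.coeff n = (2 * ℓ - 1 - 2 * n) * q.coeff (n + 1) := by
  have h0 : (whithamPoly ℓ q).coeff (n + 1) = 0 := by rw [h, coeff_C]; simp
  rw [whitham_coeff] at h0
  linear_combination h0 / 2

lemma const_of_star (ℓ : ℕ) (q : Polynomial ℂ)
    (h : ∀ n, ((ℓ : ℂ) - n) * q.coeff n = (2 * ℓ - 1 - 2 * n) * q.coeff (n + 1)) :
    whithamPoly ℓ q = C ((whithamPoly ℓ q).coeff 0) := by
  ext n
  cases n with
  | zero => simp
  | succ m =>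
    rw [whitham_coeff, coeff_C, if_neg (by omega)]
    linear_combination 2 * h m

lemma uniq_aux (ℓ : ℕ) (q r : Polynomial ℂ) (hq : q.Monic) (hqd : q.natDegree = ℓ)
    (hr : r.Monic) (hrd : r.natDegree = ℓ)
    (hsq : ∀ n, ((ℓ : ℂ) - n) * q.coeff n = (2 * ℓ - 1 - 2 * n) * q.coeff (n + 1))
    (hsr : ∀ n, ((ℓ : ℂ) - n) * r.coeff n = (2 * ℓ - 1 - 2 * n) * r.coeff (n + 1)) :
    q = r := by
  have aux : ∀ j, q.coeff (ℓ - j) = r.coeff (ℓ - j) := by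
    intro j
    induction j with
    | zero =>
      simp only [Nat.sub_zero]
      rw [← hqd, hq.coeff_natDegree, hqd, ← hrd, hr.coeff_natDegree]
    | succ j ih =>
      by_cases hj : ℓ ≤ j
      · rw [show ℓ - (j + 1) = ℓ - j from by omega]; exact ih
      · have hk : ℓ - (j + 1) + 1 = ℓ - j := by omega
        have h1 := hsq (ℓ - (j + 1))
        have h2 := hsr (ℓ - (j + 1))
        rw [hk, ih] at h1
        have hne : ((ℓ : ℂ) - (ℓ - (j + 1) : ℕ)) ≠ 0 := by
          have : ((ℓ - (j + 1) : ℕ) : ℂ) = (ℓ : ℂ) - (j + 1 : ℂ) := by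
            push_cast [Nat.cast_sub (by omega : j + 1 ≤ ℓ)]; ring
          rw [this]
          intro hcontra
          have : ((j : ℂ) + 1) = 0 := by linear_combination hcontra
          exact_mod_cast Nat.cast_add_one_ne_zero j this
        rw [hk] at h2
        exact mul_left_cancel₀ hne (h1.trans h2.symm)
  ext k
  by_cases hkl : k ≤ ℓ
  · have := aux (ℓ - k)
    rwa [show ℓ - (ℓ - k) = k from by omega] at this
  · rw [coeff_eq_zero_of_natDegree_lt (by omega : q.natDegree < k),
      coeff_eq_zero_of_natDegree_lt (by omega : r.natDegree < k)]

theorem stmt0 (ℓ : ℕ) :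
    ∃! q : Polynomial ℂ, q.Monic ∧ q.natDegree = ℓ ∧
      (1 ≤ ℓ → q.coeff (ℓ - 1) = 1) ∧ ∃ K : ℂ, whithamPoly ℓ q = C K := by
  refine ⟨qpoly ℓ, ⟨qpoly_monic ℓ, qpoly_natDegree ℓ, ?_, _, const_of_star ℓ _ (qpoly_star ℓ)⟩, ?_⟩
  · intro hℓ
    rw [coeff_qpoly, if_pos (by omega)]
    unfold qcoef
    rw [show ℓ - (ℓ - 1) = 1 from by omega]
    norm_num [Nat.centralBinom]
  · rintro r ⟨hm, hd, -, K, hK⟩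
    exact uniq_aux ℓ r (qpoly ℓ) hm hd (qpoly_monic ℓ) (qpoly_natDegree ℓ)
      (star_of_const ℓ r K hK) (qpoly_star ℓ)
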